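/- Let 0 < s < 1 and K ≥ 1, and let x, y be reals with 0 < y ≤ x ≤ K·y. Then (x + y)^s ≤ (K/(1+K))^{1−s}·(x^s + y^s). -/
import Mathlib


/-- Second part of Lemma B.1 iii): for `0 < s < 1`, `K ≥ 1` and `0 < y ≤ x ≤ K·y`,
`(x + y)^s ≤ (K/(1+K))^{1−s}·(x^s + y^s)`. -/
theorem add_rpow_le_of_comparable (s K x y : ℝ) (hs : 0 < s) (hs1 : s < 1) (hK : 1 ≤ K)
    (hy : 0 < y) (hyx : y ≤ x) (hxK : x ≤ K * y) :
    (x + y) ^ s ≤ (K / (1 + K)) ^ (1 - s) * (x ^ s + y ^ s) := by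
  have hx : 0 < x := hy.trans_le hyx
  have hxy : 0 < x + y := by linarith
  have hK0 : (0:ℝ) < 1 + K := by linarith
  set c := K / (1 + K) with hc
  have hc0 : 0 < c := div_pos (by linarith) hK0
  have hxc : x ≤ c * (x + y) := by
    rw [hc, div_mul_eq_mul_div, le_div_iff₀ hK0]; nlinarith
  have hyc : y ≤ c * (x + y) := by
    rw [hc, div_mul_eq_mul_div, le_div_iff₀ hK0]; nlinarith
  have h1s : (0:ℝ) < 1 - s := by linarith
  have hsplit : ∀ z : ℝ, 0 < z → z = z ^ s * z ^ (1 - s) := by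
    intro z hz
    rw [← Real.rpow_add hz]
    norm_num
  have hxb : x ≤ x ^ s * (c * (x + y)) ^ (1 - s) := by
    calc x = x ^ s * x ^ (1 - s) := hsplit x hx
    _ ≤ x ^ s * (c * (x + y)) ^ (1 - s) := by
        apply mul_le_mul_of_nonneg_left _ (Real.rpow_nonneg hx.le s)
        exact Real.rpow_le_rpow hx.le hxc h1s.le
  have hyb : y ≤ y ^ s * (c * (x + y)) ^ (1 - s) := by
    calc y = y ^ s * y ^ (1 - s) := hsplit y hy
    _ ≤ y ^ s * (c * (x + y)) ^ (1 - s) := by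
        apply mul_le_mul_of_nonneg_left _ (Real.rpow_nonneg hy.le s)
        exact Real.rpow_le_rpow hy.le hyc h1s.le
  have key : (x + y) ^ s * (x + y) ^ (1 - s)
      ≤ (c ^ (1 - s) * (x ^ s + y ^ s)) * (x + y) ^ (1 - s) := by
    rw [← hsplit (x + y) hxy]
    calc x + y ≤ (x ^ s + y ^ s) * (c * (x + y)) ^ (1 - s) := by
          rw [add_mul]; exact add_le_add hxb hyb
    _ = (c ^ (1 - s) * (x ^ s + y ^ s)) * (x + y) ^ (1 - s) := by
          rw [Real.mul_rpow hc0.le hxy.le]; ring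
  exact le_of_mul_le_mul_right key (Real.rpow_pos_of_pos hxy _)
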